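/- In the ladder graph L_n = P_n □ K_2 (n ≥ 2), the difference R_{L_n}[(a_1,c_1),(a_n,c_2)] − R_{L_n}[(a_1,c_1),(a_n,c_1)] equals 2√3/(a^n − b^n) where a = 2+√3 and b = 2−√3; in particular this difference is positive. -/

import Mathlib

open Matrix Finset

open Classical in
/-- The Moore–Penrose pseudoinverse of a real square matrix, defined via the
four Penrose conditions (it is unique when it exists). -/
noncomputable def Matrix.mpinv {m : Type*} [Fintype m] [DecidableEq m]
    (A : Matrix m m ℝ) : Matrix m m ℝ :=
  if h : ∃ B : Matrix m m ℝ,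
      A * B * A = A ∧ B * A * B = B ∧ (A * B)ᵀ = A * B ∧ (B * A)ᵀ = B * A
  then h.choose else 0

/-- Effective resistance between `u` and `v` with respect to a (weighted)
Laplacian matrix `L`:  `(e_u - e_v)ᵀ L⁺ (e_u - e_v)`. -/
noncomputable def effRes {m : Type*} [Fintype m] [DecidableEq m]
    (L : Matrix m m ℝ) (u v : m) : ℝ :=
  (Pi.single u 1 - Pi.single v 1) ⬝ᵥ (L.mpinv *ᵥ (Pi.single u 1 - Pi.single v 1))

/-- The (real) Laplacian matrix of a simple graph. -/
noncomputable def lapm {V : Type*} [Fintype V] [DecidableEq V]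
    (G : SimpleGraph V) : Matrix V V ℝ :=
  letI := Classical.decRel G.Adj
  G.lapMatrix ℝ

/-- Resistance distance between two vertices of a simple graph. -/
noncomputable def resDist {V : Type*} [Fintype V] [DecidableEq V]
    (G : SimpleGraph V) (u v : V) : ℝ :=
  effRes (lapm G) u v

/-- Resistance diameter of a simple graph. -/
noncomputable def resDiam {V : Type*} [Fintype V] [DecidableEq V]
    (G : SimpleGraph V) : ℝ :=
  ⨆ p : V × V, resDist G p.1 p.2

/-- The weighted Laplacian of the cone over `G` with apex `Sum.inr ()`:
edges of `G` have conductance `1` (unit resistance), and each vertex of `G`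
is joined to the apex by an edge of conductance `m` (resistance `1/m`). -/
noncomputable def coneLap {V : Type*} [Fintype V] [DecidableEq V]
    (G : SimpleGraph V) (m : ℝ) : Matrix (V ⊕ Unit) (V ⊕ Unit) ℝ :=
  letI := Classical.decRel G.Adj
  let W : Matrix (V ⊕ Unit) (V ⊕ Unit) ℝ := fun i j =>
    match i, j with
    | Sum.inl a, Sum.inl b => if G.Adj a b then 1 else 0
    | Sum.inl _, Sum.inr _ => m
    | Sum.inr _, Sum.inl _ => m
    | Sum.inr _, Sum.inr _ => 0
  Matrix.of fun i j => (if i = j then ∑ k, W i k else 0) - W i j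

/-- The `k`-dimensional hypercube graph `Q_k`. -/
def hypercube (k : ℕ) : SimpleGraph (Fin k → Bool) where
  Adj x y := (Finset.univ.filter fun i => x i ≠ y i).card = 1
  symm := by
    constructor
    intro x y h
    rw [← h]
    congr 1
    ext i
    simp [ne_comm]
  loopless := by constructor; intro x; simp

/-- The join `G + H` of two graphs on disjoint vertex sets. -/
def graphJoin {V W : Type*} (G : SimpleGraph V) (H : SimpleGraph W) :
    SimpleGraph (V ⊕ W) where
  Adj x y :=
    match x, y with
    | Sum.inl a, Sum.inl b => G.Adj a b
    | Sum.inr a, Sum.inr b => H.Adj a b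
    | Sum.inl _, Sum.inr _ => True
    | Sum.inr _, Sum.inl _ => True
  symm := by
    constructor
    rintro (a | a) (b | b) h
    · exact G.adj_symm h
    · trivial
    · trivial
    · exact H.adj_symm h
  loopless := by
    constructor
    rintro (a | a) h
    · exact G.irrefl h
    · exact H.irrefl h


lemma penrose_unique {m : Type*} [Fintype m] [DecidableEq m] {L B C : Matrix m m ℝ}
    (hB1 : L*B*L = L) (hB2 : B*L*B = B) (hB3 : (L*B)ᵀ = L*B) (hB4 : (B*L)ᵀ = B*L)
    (hC1 : L*C*L = L) (hC2 : C*L*C = C) (hC3 : (L*C)ᵀ = L*C) (hC4 : (C*L)ᵀ = C*L) :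
    B = C := by
  have h1 : L*B = L*C := by
    calc L*B = (L*B)ᵀ := hB3.symm
    _ = Bᵀ * Lᵀ := by rw [transpose_mul]
    _ = Bᵀ * (L*C*L)ᵀ := by rw [hC1]
    _ = Bᵀ * (Lᵀ * (L*C)ᵀ) := by rw [transpose_mul]
    _ = (Bᵀ * Lᵀ) * (L*C) := by rw [hC3]; simp only [mul_assoc]
    _ = (L*B)ᵀ * (L*C) := by rw [transpose_mul]
    _ = (L*B) * (L*C) := by rw [hB3]
    _ = (L*B*L)*C := by simp only [mul_assoc]
    _ = L*C := by rw [hB1]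
  have h2 : C*L = B*L := by
    calc C*L = C*(L*B*L) := by rw [hB1]
    _ = (C*L)*(B*L) := by simp only [mul_assoc]
    _ = ((B*L)*(C*L))ᵀ := by rw [transpose_mul, hC4, hB4]
    _ = (B*(L*C*L))ᵀ := by simp only [mul_assoc]
    _ = (B*L)ᵀ := by rw [hC1]
    _ = B*L := hB4
  calc B = B*L*B := hB2.symm
  _ = C*L*B := by rw [← h2]
  _ = C*(L*C) := by rw [mul_assoc, h1]
  _ = C := by rw [← mul_assoc, hC2]

lemma mpinv_eq {m : Type*} [Fintype m] [DecidableEq m] {L B : Matrix m m ℝ}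
    (h1 : L*B*L = L) (h2 : B*L*B = B) (h3 : (L*B)ᵀ = L*B) (h4 : (B*L)ᵀ = B*L) :
    L.mpinv = B := by
  have hex : ∃ B : Matrix m m ℝ, L*B*L = L ∧ B*L*B = B ∧ (L*B)ᵀ = L*B ∧ (B*L)ᵀ = B*L :=
    ⟨B, h1, h2, h3, h4⟩
  rw [Matrix.mpinv, dif_pos hex]
  obtain ⟨c1, c2, c3, c4⟩ := hex.choose_spec
  exact penrose_unique c1 c2 c3 c4 h1 h2 h3 h4

section Lap
variable {V : Type*} [Fintype V] [DecidableEq V]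

noncomputable def onesMat (V : Type*) [Fintype V] : Matrix V V ℝ :=
  Matrix.of fun _ _ => (Fintype.card V : ℝ)⁻¹

lemma lapm_eq (G : SimpleGraph V) [inst : DecidableRel G.Adj] :
    lapm G = G.lapMatrix ℝ := by
  unfold lapm
  congr!

lemma lapm_symm (G : SimpleGraph V) : (lapm G)ᵀ = lapm G := by
  classical
  rw [lapm_eq]
  exact G.isSymm_lapMatrix ℝ

lemma lapm_apply (G : SimpleGraph V) [h : DecidableRel G.Adj] (p q : V) :
    lapm G p q = (if p = q then ∑ u, (if G.Adj p u then (1:ℝ) else 0) else 0)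
      - (if G.Adj p q then 1 else 0) := by
  rw [lapm_eq, SimpleGraph.lapMatrix, Matrix.sub_apply]
  congr 1
  · rw [SimpleGraph.degMatrix, Matrix.diagonal_apply]
    split
    · exact SimpleGraph.degree_eq_sum_if_adj G p
    · rfl

lemma lapm_mulVec (G : SimpleGraph V) [DecidableRel G.Adj] (w : V → ℝ) (v : V) :
    (lapm G *ᵥ w) v = ∑ u, if G.Adj v u then (w v - w u) else 0 := by
  rw [lapm_eq, SimpleGraph.lapMatrix_mulVec_apply, SimpleGraph.neighborFinset_eq_filter,
    sum_filter,
    show ((G.degree v : ℝ)) = ∑ u, if G.Adj v u then (1:ℝ) else 0 from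
      SimpleGraph.degree_eq_sum_if_adj G v,
    sum_mul, ← sum_sub_distrib]
  congr 1
  ext u
  split <;> simp

lemma lapm_row_sum (G : SimpleGraph V) (i : V) : ∑ j, lapm G i j = 0 := by
  classical
  have h := congrFun (SimpleGraph.lapMatrix_mulVec_const_eq_zero (R := ℝ) G) i
  simp only [mulVec, dotProduct, mul_one, Pi.zero_apply] at h
  rw [lapm_eq]
  exact h

lemma lapm_col_sum (G : SimpleGraph V) (j : V) : ∑ i, lapm G i j = 0 := by
  calc ∑ i, lapm G i j = ∑ i, (lapm G)ᵀ j i := rfl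
  _ = ∑ i, lapm G j i := by rw [lapm_symm]
  _ = 0 := lapm_row_sum G j

lemma lapm_mul_ones (G : SimpleGraph V) : lapm G * onesMat V = 0 := by
  ext i j
  simp only [Matrix.mul_apply, onesMat, Matrix.of_apply, Matrix.zero_apply, ← sum_mul,
    lapm_row_sum, zero_mul]

lemma ones_mul_lapm (G : SimpleGraph V) : onesMat V * lapm G = 0 := by
  ext i j
  simp only [Matrix.mul_apply, onesMat, Matrix.of_apply, Matrix.zero_apply, ← mul_sum,
    lapm_col_sum, mul_zero]

lemma ones_mul_ones [Nonempty V] : onesMat V * onesMat V = onesMat V := by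
  have hc : (Fintype.card V : ℝ) ≠ 0 := by
    simp [Fintype.card_ne_zero]
  ext i j
  simp only [Matrix.mul_apply, onesMat, Matrix.of_apply, sum_const, card_univ, nsmul_eq_mul]
  field_simp

lemma ones_transpose : (onesMat V)ᵀ = onesMat V := by
  ext i j
  rfl

lemma lapm_add_ones_det (G : SimpleGraph V) [Nonempty V] (hG : G.Connected) :
    IsUnit (lapm G + onesMat V).det := by
  classical
  rw [isUnit_iff_ne_zero]
  intro h0
  obtain ⟨v, hv, hveq⟩ := Matrix.exists_mulVec_eq_zero_iff.mpr h0
  have hc : (0:ℝ) < (Fintype.card V : ℝ) := by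
    exact_mod_cast Fintype.card_pos
  have hq : v ⬝ᵥ ((lapm G + onesMat V) *ᵥ v) = 0 := by rw [hveq, dotProduct_zero]
  rw [Matrix.add_mulVec, dotProduct_add] at hq
  have hP : v ⬝ᵥ (onesMat V *ᵥ v) = (Fintype.card V : ℝ)⁻¹ * (∑ i, v i)^2 := by
    simp only [dotProduct, mulVec, onesMat, Matrix.of_apply, ← mul_sum]
    rw [← sum_mul]
    ring
  have hL0 : 0 ≤ v ⬝ᵥ (lapm G *ᵥ v) := by
    have h := (SimpleGraph.posSemidef_lapMatrix (R := ℝ) G).dotProduct_mulVec_nonneg v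
    rw [star_trivial, ← lapm_eq] at h
    exact h
  have hP0 : 0 ≤ v ⬝ᵥ (onesMat V *ᵥ v) := by
    rw [hP]
    positivity
  have hLv : v ⬝ᵥ (lapm G *ᵥ v) = 0 := by linarith
  have hconst : ∀ i j, v i = v j := by
    intro i j
    refine (SimpleGraph.lapMatrix_toLinearMap₂'_apply'_eq_zero_iff_forall_reachable G v).mp ?_ i j
      (hG.preconnected i j)
    rw [Matrix.toLinearMap₂'_apply', lapm_eq] at *
    exact hLv
  obtain ⟨i0⟩ := (inferInstance : Nonempty V)
  have hsum : ∑ i, v i = (Fintype.card V : ℝ) * v i0 := by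
    rw [sum_congr rfl fun i _ => hconst i i0, sum_const, card_univ, nsmul_eq_mul]
  have hPz : v ⬝ᵥ (onesMat V *ᵥ v) = 0 := by linarith
  rw [hP, hsum] at hPz
  have hvz : v i0 = 0 := by
    have h2 : ((Fintype.card V : ℝ) * v i0)^2 = 0 := by
      field_simp at hPz
      simpa using hPz
    have := pow_eq_zero_iff (n := 2) (by norm_num) |>.mp h2
    nlinarith
  apply hv
  funext i
  rw [hconst i i0, hvz]
  rfl

lemma mpinv_props (G : SimpleGraph V) [Nonempty V] (hG : G.Connected) :
    (lapm G).mpinv = (lapm G + onesMat V)⁻¹ - onesMat V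
    ∧ ((lapm G).mpinv)ᵀ = (lapm G).mpinv
    ∧ (lapm G).mpinv * lapm G = 1 - onesMat V
    ∧ lapm G * (lapm G).mpinv = 1 - onesMat V
    ∧ onesMat V * (lapm G).mpinv = 0
    ∧ (lapm G).mpinv * onesMat V = 0 := by
  set L := lapm G with hLdef
  set P := onesMat V with hPdef
  have hLP : L * P = 0 := lapm_mul_ones G
  have hPL : P * L = 0 := ones_mul_lapm G
  have hPP : P * P = P := ones_mul_ones
  have hdet := lapm_add_ones_det G hG
  set N := (L + P)⁻¹ with hNdef
  have hNLP : N * (L + P) = 1 := Matrix.nonsing_inv_mul _ hdet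
  have hLPN : (L + P) * N = 1 := Matrix.mul_nonsing_inv _ hdet
  have hNP : N * P = P := by
    have h1 : (L + P) * P = P := by rw [add_mul, hLP, hPP, zero_add]
    calc N * P = N * ((L + P) * P) := by rw [h1]
    _ = (N * (L + P)) * P := by rw [mul_assoc]
    _ = P := by rw [hNLP, one_mul]
  have hPN : P * N = P := by
    have h1 : P * (L + P) = P := by rw [mul_add, hPL, hPP, zero_add]
    calc P * N = (P * (L + P)) * N := by rw [h1]
    _ = P * ((L + P) * N) := by rw [mul_assoc]
    _ = P := by rw [hLPN, mul_one]
  have hLN : L * N = 1 - P := by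
    calc L * N = (L + P) * N - P * N := by rw [add_mul]; abel
    _ = 1 - P := by rw [hLPN, hPN]
  have hNL : N * L = 1 - P := by
    calc N * L = N * (L + P) - N * P := by rw [mul_add]; abel
    _ = 1 - P := by rw [hNLP, hNP]
  set B := N - P with hBdef
  have hLB : L * B = 1 - P := by rw [hBdef, mul_sub, hLN, hLP, sub_zero]
  have hBL : B * L = 1 - P := by rw [hBdef, sub_mul, hNL, hPL, sub_zero]
  have hPB : P * B = 0 := by rw [hBdef, mul_sub, hPN, hPP, sub_self]
  have hBP : B * P = 0 := by rw [hBdef, sub_mul, hNP, hPP, sub_self]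
  have pen1 : L * B * L = L := by rw [hLB, sub_mul, one_mul, hPL, sub_zero]
  have pen2 : B * L * B = B := by rw [hBL, sub_mul, one_mul, hPB, sub_zero]
  have hPt : Pᵀ = P := ones_transpose
  have pen3 : (L * B)ᵀ = L * B := by rw [hLB, transpose_sub, transpose_one, hPt]
  have pen4 : (B * L)ᵀ = B * L := by rw [hBL, transpose_sub, transpose_one, hPt]
  have hmp : L.mpinv = B := mpinv_eq pen1 pen2 pen3 pen4
  have hBt : Bᵀ = B := by
    simp only [hBdef, hNdef, transpose_sub, Matrix.transpose_nonsing_inv, transpose_add,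
      hPdef, ones_transpose, lapm_symm]
    rw [show Lᵀ = L from lapm_symm G]
  refine ⟨hmp, by rw [hmp, hBt], by rw [hmp, hBL], by rw [hmp, hLB], by rw [hmp, hPB],
    by rw [hmp, hBP]⟩

lemma mpinv_submatrix (G : SimpleGraph V) [Nonempty V] (hG : G.Connected) (σ : V ≃ V)
    (hσ : (lapm G).submatrix σ σ = lapm G) :
    (lapm G).mpinv.submatrix σ σ = (lapm G).mpinv := by
  obtain ⟨_, hBt, hBL, hLB, hPB, hBP⟩ := mpinv_props G hG
  set L := lapm G with hLdef
  set B := L.mpinv with hBdef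
  set P := onesMat V with hPdef
  have hPsub : P.submatrix σ σ = P := rfl
  have hOneSub : ((1 - P) : Matrix V V ℝ).submatrix σ σ = 1 - P := by
    ext i j
    simp only [Matrix.submatrix_apply, Matrix.sub_apply, Matrix.one_apply,
      EmbeddingLike.apply_eq_iff_eq, hPdef, onesMat, Matrix.of_apply]
  have e1 : L * B.submatrix σ σ = 1 - P := by
    conv_lhs => rw [← hσ]
    rw [Matrix.submatrix_mul_equiv, hLB, hOneSub]
  have e2 : B.submatrix σ σ * L = 1 - P := by
    conv_lhs => rw [← hσ]
    rw [Matrix.submatrix_mul_equiv, hBL, hOneSub]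
  have ePB : P * B.submatrix σ σ = 0 := by
    conv_lhs => rw [← hPsub]
    rw [Matrix.submatrix_mul_equiv, hPB, Matrix.submatrix_zero]
    rfl
  have hPL : P * L = 0 := ones_mul_lapm G
  have hPt : Pᵀ = P := ones_transpose
  have p1 : L * B.submatrix σ σ * L = L := by
    rw [e1, sub_mul, one_mul, hPL, sub_zero]
  have p2 : B.submatrix σ σ * L * B.submatrix σ σ = B.submatrix σ σ := by
    rw [e2, sub_mul, one_mul, ePB, sub_zero]
  have p3 : (L * B.submatrix σ σ)ᵀ = L * B.submatrix σ σ := by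
    rw [e1, transpose_sub, transpose_one, hPt]
  have p4 : (B.submatrix σ σ * L)ᵀ = B.submatrix σ σ * L := by
    rw [e2, transpose_sub, transpose_one, hPt]
  exact (mpinv_eq p1 p2 p3 p4).symm


noncomputable def psiN (n k : ℕ) : ℝ :=
  ((1 + Real.sqrt 3) * (2 + Real.sqrt 3)^k + (Real.sqrt 3 - 1) * (2 - Real.sqrt 3)^k)
    / (2 * ((2 + Real.sqrt 3)^n - (2 - Real.sqrt 3)^n))

lemma sqrt3_sq : (Real.sqrt 3)^2 = 3 := Real.sq_sqrt (by norm_num)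

lemma sqrt3_pos : 0 < Real.sqrt 3 := Real.sqrt_pos.mpr (by norm_num)

lemma sqrt3_lt_two : Real.sqrt 3 < 2 := by
  nlinarith [sqrt3_sq, Real.sqrt_nonneg 3]

lemma den_pos {n : ℕ} (hn : 1 ≤ n) :
    0 < (2 + Real.sqrt 3)^n - (2 - Real.sqrt 3)^n := by
  have h1 : (0:ℝ) ≤ 2 - Real.sqrt 3 := by linarith [sqrt3_lt_two]
  have h2 : (2 - Real.sqrt 3 : ℝ) < 2 + Real.sqrt 3 := by linarith [sqrt3_pos]
  exact sub_pos.mpr (pow_lt_pow_left₀ h2 h1 (by omega))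

lemma psi0_val (n : ℕ) :
    psiN n 0 = Real.sqrt 3 / ((2 + Real.sqrt 3)^n - (2 - Real.sqrt 3)^n) := by
  have h : (1 + Real.sqrt 3) * 1 + (Real.sqrt 3 - 1) * 1 = 2 * Real.sqrt 3 := by ring
  rw [psiN, pow_zero, pow_zero, h, mul_div_mul_left _ _ (two_ne_zero)]

lemma psi_rec0 (n : ℕ) : 3 * psiN n 0 - psiN n 1 = 0 := by
  rw [psiN, psiN]
  ring

lemma psi_reci (n m : ℕ) : 4 * psiN n (m+1) - psiN n m - psiN n (m+2) = 0 := by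
  rw [psiN, psiN, psiN]
  set s := Real.sqrt 3 with hsdef
  set D := 2 * ((2 + s)^n - (2 - s)^n) with hDdef
  have hs : s^2 = 3 := sqrt3_sq
  linear_combination (-(((1+s)*(2+s)^m + (s-1)*(2-s)^m)) / D) * hs

lemma psi_recN {n : ℕ} (hn : 2 ≤ n) : 3 * psiN n (n-1) - psiN n (n-2) = 1 := by
  obtain ⟨m, rfl⟩ : ∃ m, n = m + 2 := ⟨n - 2, by omega⟩
  show 3 * psiN (m+2) (m+1) - psiN (m+2) m = 1
  rw [psiN, psiN]
  set s := Real.sqrt 3 with hsdef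
  have hs : s^2 = 3 := sqrt3_sq
  have hD : (2 : ℝ) * ((2 + s)^(m+2) - (2 - s)^(m+2)) ≠ 0 := by
    have := den_pos (n := m+2) (by omega)
    positivity
  rw [mul_div_assoc', div_sub_div_same, div_eq_one_iff_eq hD]
  linear_combination ((2+s)^m - (2-s)^m) * hs

instance pathGraphAdjDecidable (n : ℕ) : DecidableRel (SimpleGraph.pathGraph n).Adj :=
  fun _ _ => decidable_of_iff _ (SimpleGraph.pathGraph_adj).symm

lemma pathSum (n : ℕ) (f : ℕ → ℝ) (i : Fin n) :
    ∑ j : Fin n, (if (SimpleGraph.pathGraph n).Adj i j then f j.val else 0)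
      = (if i.val + 1 < n then f (i.val+1) else 0)
        + (if 1 ≤ i.val then f (i.val-1) else 0) := by
  have hsplit : ∀ j : Fin n, (if (SimpleGraph.pathGraph n).Adj i j then f j.val else 0)
      = (if i.val + 1 = j.val then f j.val else 0)
        + (if j.val + 1 = i.val then f j.val else 0) := by
    intro j
    simp only [SimpleGraph.pathGraph_adj]
    by_cases h1 : i.val + 1 = j.val <;> by_cases h2 : j.val + 1 = i.val
    · omega
    · simp [h1, h2]
    · simp [h1, h2]
    · simp [h1, h2]
  rw [sum_congr rfl fun j _ => hsplit j, sum_add_distrib]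
  congr 1
  · by_cases h : i.val + 1 < n
    · rw [if_pos h]
      have : ∀ j : Fin n, (i.val + 1 = j.val) ↔ (j = (⟨i.val+1, h⟩ : Fin n)) := by
        intro j
        rw [Fin.ext_iff]
        simp only [Fin.val_mk]
        omega
      rw [sum_congr rfl fun j _ => if_congr (this j) rfl rfl, Finset.sum_ite_eq' univ]
      simp
    · rw [if_neg h]
      refine sum_eq_zero fun j _ => if_neg (by omega)
  · by_cases h : 1 ≤ i.val
    · rw [if_pos h]
      have hlt : i.val - 1 < n := by omega
      have : ∀ j : Fin n, (j.val + 1 = i.val) ↔ (j = (⟨i.val-1, hlt⟩ : Fin n)) := by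
        intro j
        rw [Fin.ext_iff]
        simp only [Fin.val_mk]
        omega
      rw [sum_congr rfl fun j _ => if_congr (this j) rfl rfl, Finset.sum_ite_eq' univ]
      simp
    · rw [if_neg h]
      refine sum_eq_zero fun j _ => if_neg (by omega)

lemma path_master {n : ℕ} (hn : 2 ≤ n) (i : Fin n) :
    (∑ j : Fin n,
        (if (SimpleGraph.pathGraph n).Adj i j then psiN n i.val - psiN n j.val else 0))
      + 2 * psiN n i.val = if i.val = n - 1 then 1 else 0 := by
  have h1 : ∀ j : Fin n, (if (SimpleGraph.pathGraph n).Adj i j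
        then psiN n i.val - psiN n j.val else 0)
      = (if (SimpleGraph.pathGraph n).Adj i j then (fun _ : ℕ => psiN n i.val) j.val else 0)
        - (if (SimpleGraph.pathGraph n).Adj i j then psiN n j.val else 0) := by
    intro j
    split <;> simp
  rw [sum_congr rfl fun j _ => h1 j, sum_sub_distrib, pathSum n (fun _ => psiN n i.val) i,
    pathSum n (psiN n) i]
  by_cases h0 : i.val = 0
  · have hlt : i.val + 1 < n := by omega
    rw [if_pos hlt, if_pos hlt, if_neg (by omega), if_neg (by omega), if_neg (by omega), h0]
    have := psi_rec0 n
    show psiN n 0 + 0 - (psiN n (0+1) + 0) + 2 * psiN n 0 = 0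
    norm_num
    linarith
  by_cases hN : i.val = n - 1
  · have hlt : ¬ (i.val + 1 < n) := by omega
    rw [if_neg hlt, if_neg hlt, if_pos (by omega), if_pos (by omega), if_pos hN, hN]
    have h2 : n - 1 - 1 = n - 2 := by omega
    rw [h2]
    have := psi_recN hn
    linarith
  · have hlt : i.val + 1 < n := by omega
    rw [if_pos hlt, if_pos hlt, if_pos (by omega), if_pos (by omega), if_neg hN]
    obtain ⟨m, hm⟩ : ∃ m, i.val = m + 1 := ⟨i.val - 1, by omega⟩
    rw [hm]
    have e1 : psiN n (m+1+1) = psiN n (m+2) := rfl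
    have e2 : psiN n (m+1-1) = psiN n m := rfl
    rw [e1, e2]
    have := psi_reci n m
    linarith


instance boxProdPathDecidable (n m : ℕ) :
    DecidableRel ((SimpleGraph.pathGraph n).boxProd (SimpleGraph.pathGraph m)).Adj :=
  fun _ _ => decidable_of_iff _ (SimpleGraph.boxProd_adj).symm

lemma effRes_expand {m : Type*} [Fintype m] [DecidableEq m] (L : Matrix m m ℝ) (u v : m) :
    effRes L u v = L.mpinv u u - L.mpinv u v - L.mpinv v u + L.mpinv v v := by
  unfold effRes
  rw [Matrix.mulVec_sub, Matrix.mulVec_single_one, Matrix.mulVec_single_one, sub_dotProduct]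
  simp only [single_dotProduct, Pi.sub_apply, Matrix.col_apply, one_mul, mul_one]
  ring

lemma fin2_cases : ∀ x : Fin 2, x = 0 ∨ x = 1 := by decide


/-- In the ladder graph `L_n`, the difference between the diagonal and the same-rail
resistance distances equals `2√3/(aⁿ − bⁿ) > 0` with `a = 2+√3`, `b = 2−√3`. -/
theorem resDist_ladder_diag_minus_straight (n : ℕ) (hn : 2 ≤ n) (a b : ℝ)
    (ha : a = 2 + Real.sqrt 3) (hb : b = 2 - Real.sqrt 3) :
    resDist ((SimpleGraph.pathGraph n).boxProd (SimpleGraph.pathGraph 2))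
        (⟨0, by omega⟩, 0) (⟨n - 1, by omega⟩, 1)
      - resDist ((SimpleGraph.pathGraph n).boxProd (SimpleGraph.pathGraph 2))
          (⟨0, by omega⟩, 0) (⟨n - 1, by omega⟩, 0)
      = 2 * Real.sqrt 3 / (a ^ n - b ^ n)
    ∧ 2 * Real.sqrt 3 / (a ^ n - b ^ n) > 0 := by
  subst ha hb
  have h0n : 0 < n := by omega
  have hn1 : n - 1 < n := by omega
  set G := (SimpleGraph.pathGraph n).boxProd (SimpleGraph.pathGraph 2) with hG
  haveI : Nonempty (Fin n × Fin 2) := ⟨(⟨0, h0n⟩, 0)⟩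
  constructor
  swap
  · exact div_pos (by positivity) (den_pos (by omega))
  have hconn : G.Connected := by
    rw [hG]
    obtain ⟨m, rfl⟩ : ∃ m, n = m + 1 := ⟨n - 1, by omega⟩
    exact SimpleGraph.Connected.boxProd (SimpleGraph.pathGraph_connected m)
      (SimpleGraph.pathGraph_connected 1)
  have hp2 : ∀ c d : Fin 2, (SimpleGraph.pathGraph 2).Adj c d ↔ ¬ c = d := by
    intro c d
    rw [SimpleGraph.pathGraph_adj]
    rcases fin2_cases c with rfl | rfl <;> rcases fin2_cases d with rfl | rfl <;> decide
  have hadj : ∀ (i j : Fin n) (c d : Fin 2), G.Adj (i,c) (j,d) ↔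
      (((SimpleGraph.pathGraph n).Adj i j ∧ c = d) ∨ (¬ c = d ∧ i = j)) := by
    intro i j c d
    rw [hG, SimpleGraph.boxProd_adj, hp2]
  set w : Fin n × Fin 2 → ℝ := fun p => (if p.2 = 0 then 1 else -1) * psiN n p.1.val with hw
  have hwsum : ∑ p : Fin n × Fin 2, w p = 0 := by
    rw [Fintype.sum_prod_type]
    refine sum_eq_zero fun j _ => ?_
    rw [Fin.sum_univ_two]
    simp [hw]
  have hLw : ∀ p : Fin n × Fin 2,
      (lapm G *ᵥ w) p = (if p.2 = 0 then 1 else -1) * (if p.1.val = n - 1 then 1 else 0) := by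
    rintro ⟨i, c⟩
    rw [lapm_mulVec, Fintype.sum_prod_type]
    rw [sum_congr rfl fun j _ => Fin.sum_univ_two
      (f := fun d => if G.Adj (i,c) (j,d) then w (i,c) - w (j,d) else 0)]
    rcases fin2_cases c with rfl | rfl
    · have e : ∀ j : Fin n,
          ((if G.Adj (i,0) (j,0) then w (i,0) - w (j,0) else 0)
            + (if G.Adj (i,0) (j,1) then w (i,0) - w (j,1) else 0))
          = (if (SimpleGraph.pathGraph n).Adj i j then psiN n i.val - psiN n j.val else 0)
            + (if i = j then psiN n i.val + psiN n j.val else 0) := by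
        intro j
        congr 1
        · exact if_congr ((hadj i j 0 0).trans (by simp))
            (by simp [hw]) rfl
        · exact if_congr ((hadj i j 0 1).trans (by simp [Fin.ext_iff]))
            (by simp [hw]) rfl
      rw [sum_congr rfl fun j _ => e j, sum_add_distrib, Finset.sum_ite_eq univ i]
      rw [if_pos (mem_univ i), if_pos rfl, one_mul]
      linarith [path_master hn i]
    · have e : ∀ j : Fin n,
          ((if G.Adj (i,1) (j,0) then w (i,1) - w (j,0) else 0)
            + (if G.Adj (i,1) (j,1) then w (i,1) - w (j,1) else 0))
          = -(if (SimpleGraph.pathGraph n).Adj i j then psiN n i.val - psiN n j.val else 0)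
            + -(if i = j then psiN n i.val + psiN n j.val else 0) := by
        intro j
        have hA : (if G.Adj (i,1) (j,0) then w (i,1) - w (j,0) else 0)
            = -(if i = j then psiN n i.val + psiN n j.val else 0) := by
          rw [show -(if i = j then psiN n i.val + psiN n j.val else 0)
              = (if i = j then -(psiN n i.val + psiN n j.val) else 0) by split <;> simp]
          refine if_congr ((hadj i j 1 0).trans (by simp [Fin.ext_iff])) ?_ rfl
          show w (i,1) - w (j,0) = -(psiN n i.val + psiN n j.val)
          simp [hw]
          ring
        have hB : (if G.Adj (i,1) (j,1) then w (i,1) - w (j,1) else 0)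
            = -(if (SimpleGraph.pathGraph n).Adj i j
                then psiN n i.val - psiN n j.val else 0) := by
          rw [show -(if (SimpleGraph.pathGraph n).Adj i j
                then psiN n i.val - psiN n j.val else 0)
              = (if (SimpleGraph.pathGraph n).Adj i j
                then -(psiN n i.val - psiN n j.val) else 0) by split <;> simp]
          refine if_congr ((hadj i j 1 1).trans (by simp)) ?_ rfl
          show w (i,1) - w (j,1) = -(psiN n i.val - psiN n j.val)
          simp [hw]
          ring
        rw [hA, hB, add_comm]
      rw [sum_congr rfl fun j _ => e j, sum_add_distrib, sum_neg_distrib, sum_neg_distrib,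
        Finset.sum_ite_eq univ i]
      rw [if_pos (mem_univ i), if_neg (by decide : ¬ ((1:Fin 2) = 0)), neg_one_mul]
      linarith [path_master hn i]
  have ht : lapm G *ᵥ w
      = (Pi.single ((⟨n-1, hn1⟩ : Fin n), (0 : Fin 2)) 1
          - Pi.single ((⟨n-1, hn1⟩ : Fin n), (1 : Fin 2)) 1 : (Fin n × Fin 2) → ℝ) := by
    funext p
    rw [hLw p]
    obtain ⟨i, c⟩ := p
    simp only [Pi.sub_apply, Pi.single_apply]
    rcases fin2_cases c with rfl | rfl <;>
      by_cases hi : i.val = n - 1 <;>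
      simp [Prod.ext_iff, Fin.ext_iff, hi]
  obtain ⟨hbform, hBt, hBL, hLB, hPB, hBP⟩ := mpinv_props G hconn
  set B := (lapm G).mpinv with hB
  have hPw : onesMat (Fin n × Fin 2) *ᵥ w = 0 := by
    funext q
    show ∑ p, (Fintype.card (Fin n × Fin 2) : ℝ)⁻¹ * w p = 0
    rw [← mul_sum, hwsum, mul_zero]
  have hBw : B *ᵥ (lapm G *ᵥ w) = w := by
    rw [Matrix.mulVec_mulVec, hBL, Matrix.sub_mulVec, Matrix.one_mulVec, hPw, sub_zero]
  have hBsymm : ∀ p q : Fin n × Fin 2, B p q = B q p := by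
    intro p q
    exact congrFun (congrFun hBt q) p
  set σ : (Fin n × Fin 2) ≃ (Fin n × Fin 2) :=
    Equiv.prodCongr (Equiv.refl (Fin n)) (Equiv.swap 0 1) with hσdef
  have hσadj : ∀ p q : Fin n × Fin 2, G.Adj (σ p) (σ q) ↔ G.Adj p q := by
    rintro ⟨i, c⟩ ⟨j, d⟩
    show G.Adj (i, Equiv.swap 0 1 c) (j, Equiv.swap 0 1 d) ↔ _
    rw [hadj, hadj, Equiv.apply_eq_iff_eq]
  have hσ : (lapm G).submatrix σ σ = lapm G := by
    ext p q
    rw [Matrix.submatrix_apply, lapm_apply, lapm_apply]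
    congr 1
    · refine if_congr (EmbeddingLike.apply_eq_iff_eq σ) ?_ rfl
      rw [← Equiv.sum_comp σ (fun u => if G.Adj (σ p) u then (1:ℝ) else 0)]
      exact sum_congr rfl fun u _ => if_congr (hσadj p u) rfl rfl
    · exact if_congr (hσadj p q) rfl rfl
  have hσB := mpinv_submatrix G hconn σ hσ
  have hBσ : ∀ p q, B (σ p) (σ q) = B p q := fun p q => congrFun (congrFun hσB p) q
  set u : Fin n × Fin 2 := (⟨0, h0n⟩, 0) with hu
  set v1 : Fin n × Fin 2 := (⟨n-1, hn1⟩, 0) with hv1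
  set v2 : Fin n × Fin 2 := (⟨n-1, hn1⟩, 1) with hv2
  have hv2v2 : B v2 v2 = B v1 v1 := by
    have hσv1 : σ v1 = v2 := by
      show (_, Equiv.swap (0 : Fin 2) 1 0) = _
      rw [Equiv.swap_apply_left]
      rfl
    calc B v2 v2 = B (σ v1) (σ v1) := by rw [hσv1]
    _ = B v1 v1 := hBσ v1 v1
  have hdiff : ∀ p, B p v1 - B p v2 = w p := by
    intro p
    have h := congrFun hBw p
    rw [ht, Matrix.mulVec_sub] at h
    simp only [Matrix.mulVec_single_one, Matrix.col_apply, Pi.sub_apply, mul_one] at h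
    exact h
  have hwu : w u = psiN n 0 := by simp [hw, hu]
  have e2 : resDist G u v2 = B u u - B u v2 - B v2 u + B v2 v2 := effRes_expand _ u v2
  have e1 : resDist G u v1 = B u u - B u v1 - B v1 u + B v1 v1 := effRes_expand _ u v1
  show resDist G u v2 - resDist G u v1
      = 2 * Real.sqrt 3 / ((2 + Real.sqrt 3) ^ n - (2 - Real.sqrt 3) ^ n)
  rw [e1, e2]
  have hd1 : B u v1 - B u v2 = psiN n 0 := by rw [hdiff u, hwu]
  have hd2 : B v1 u - B v2 u = psiN n 0 := by
    rw [hBsymm v1 u, hBsymm v2 u, hdiff u, hwu]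
  have : B u u - B u v2 - B v2 u + B v2 v2 - (B u u - B u v1 - B v1 u + B v1 v1)
      = (B u v1 - B u v2) + (B v1 u - B v2 u) + (B v2 v2 - B v1 v1) := by ring
  rw [this, hd1, hd2, hv2v2, sub_self, add_zero, psi0_val]
  ring
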